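/- The Virasoro cocycle γ(l_n, l_m) = (1/12)(n³ − n) δ_{n+m,0} on the Witt algebra is not a coboundary: there exists no linear map φ : W → ℂ with γ(a,b) = φ([a,b]) for all a, b ∈ W. -/

import Mathlib

/-- The Witt algebra, modelled as `ℤ →₀ ℂ` with basis `l_n = single n 1`, with its bracket
`[l_n, l_m] = (m - n) l_{n+m}` as a bilinear map. -/
noncomputable def wittBracket : (ℤ →₀ ℂ) →ₗ[ℂ] (ℤ →₀ ℂ) →ₗ[ℂ] (ℤ →₀ ℂ) :=
  Finsupp.lsum ℂ fun n =>
    LinearMap.toSpanSingleton ℂ ((ℤ →₀ ℂ) →ₗ[ℂ] (ℤ →₀ ℂ))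
      (Finsupp.lsum ℂ fun m => ((m : ℂ) - (n : ℂ)) • Finsupp.lsingle (n + m))

/-- The Virasoro cocycle `γ(l_n, l_m) = (1/12)(n³ − n) δ_{n+m,0}`, extended bilinearly. -/
noncomputable def virasoroCocycle : (ℤ →₀ ℂ) →ₗ[ℂ] (ℤ →₀ ℂ) →ₗ[ℂ] ℂ :=
  Finsupp.lsum ℂ fun n =>
    LinearMap.toSpanSingleton ℂ ((ℤ →₀ ℂ) →ₗ[ℂ] ℂ)
      (Finsupp.lsum ℂ fun m =>
        LinearMap.toSpanSingleton ℂ ℂ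
          (if n + m = 0 then ((n : ℂ) ^ 3 - (n : ℂ)) / 12 else 0))

lemma witt_single (n m : ℤ) : wittBracket (Finsupp.single n 1) (Finsupp.single m 1)
    = ((m:ℂ) - n) • Finsupp.single (n+m) 1 := by
  rw [wittBracket, Finsupp.lsum_single, LinearMap.toSpanSingleton_apply, one_smul,
    Finsupp.lsum_single]
  simp

lemma vir_single (n m : ℤ) : virasoroCocycle (Finsupp.single n 1) (Finsupp.single m 1)
    = (if n + m = 0 then ((n : ℂ) ^ 3 - (n : ℂ)) / 12 else 0) := by
  rw [virasoroCocycle, Finsupp.lsum_single, LinearMap.toSpanSingleton_apply, one_smul,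
    Finsupp.lsum_single, LinearMap.toSpanSingleton_apply, one_smul]

/-- The Virasoro cocycle is not a coboundary: there is no linear functional `φ` on the
Witt algebra with `γ(a,b) = φ([a,b])` for all `a, b`. -/
theorem virasoroCocycle_not_coboundary :
    ¬ ∃ φ : (ℤ →₀ ℂ) →ₗ[ℂ] ℂ, ∀ a b : ℤ →₀ ℂ,
      virasoroCocycle a b = φ (wittBracket a b) := by
  rintro ⟨φ, h⟩
  have h1 := h (Finsupp.single 1 1) (Finsupp.single (-1) 1)
  have h2 := h (Finsupp.single 2 1) (Finsupp.single (-2) 1)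
  rw [witt_single, vir_single] at h1 h2
  norm_num at h1 h2
  simp [h1] at h2
  have h4 : (Finsupp.single (0:ℤ) (4:ℂ)) = (2:ℂ) • Finsupp.single 0 2 := by
    rw [Finsupp.smul_single]; norm_num
  rw [h4, map_smul, h1] at h2
  norm_num at h2
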